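/- The closure in C([0,1]) of the set {x ↦ R(e^{2πix})·conj(R(e^{2πix})) : R a Laurent polynomial with complex coefficients} is exactly the set of continuous functions f: [0,1] → ℝ that are nonnegative and satisfy f(0) = f(1). -/

import Mathlib

open Complex

/-- Evaluation of a Laurent polynomial (coefficient function `R : ℤ →₀ ℂ`,
representing `Σ_k R(k) z^k`) at a nonzero complex number. -/
noncomputable def laurentEval (R : ℤ →₀ ℂ) (z : ℂ) : ℂ :=
  R.sum fun k c => c * z ^ k

lemma fourier_eq_exp_pow (n : ℤ) (x : ℝ) :
    @fourier (1:ℝ) n ((x : ℝ) : AddCircle (1:ℝ)) =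
      Complex.exp (2 * Real.pi * Complex.I * x) ^ n := by
  rw [fourier_coe_apply, ← Complex.exp_int_mul]
  congr 1; push_cast; ring

/-- A continuous function on `[0,1]` with equal endpoint values descends to the circle. -/
lemma exists_addCircle_lift (s : unitInterval → ℝ) (hs_cont : Continuous s)
    (hs01 : s 0 = s 1) :
    ∃ F : AddCircle (1:ℝ) → ℝ, Continuous F ∧
      ∀ x : unitInterval, F (((x:ℝ) : AddCircle (1:ℝ))) = s x := by
  haveI : Fact (0 < (1:ℝ)) := ⟨one_pos⟩
  set Hr : ℝ → ℝ := fun t => s (Set.projIcc 0 1 zero_le_one t) with hHr_def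
  have hHr_cont : Continuous Hr := hs_cont.comp continuous_projIcc
  have hHr01 : Hr 0 = Hr (0 + 1) := by
    simp only [hHr_def, zero_add]
    rw [Set.projIcc_left, Set.projIcc_right]
    exact hs01
  refine ⟨AddCircle.liftIco 1 0 Hr, AddCircle.liftIco_continuous hHr01 hHr_cont.continuousOn, ?_⟩
  have key : ∀ x : unitInterval, (x:ℝ) ∈ Set.Ico (0:ℝ) 1 →
      AddCircle.liftIco 1 0 Hr (((x:ℝ) : AddCircle (1:ℝ))) = s x := by
    intro x hx
    rw [AddCircle.liftIco_coe_apply (by simpa using hx), hHr_def]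
    simp only
    rw [Set.projIcc_of_mem zero_le_one x.2]
  intro x
  rcases lt_or_eq_of_le x.2.2 with h | h
  · exact key x ⟨x.2.1, h⟩
  · have hx1 : (x:ℝ) = 1 := h
    have hxx : x = 1 := Subtype.ext hx1
    have h01 : ((1:ℝ) : AddCircle (1:ℝ)) = (((0:unitInterval):ℝ) : AddCircle (1:ℝ)) := by
      show ((1:ℝ) : AddCircle (1:ℝ)) = ((0:ℝ) : AddCircle (1:ℝ))
      rw [AddCircle.coe_period]
      norm_cast
    rw [hx1, h01, key 0 (by constructor <;> norm_num), hxx, hs01]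

theorem closure_of_squares :
    closure {f : C(unitInterval, ℂ) | ∃ R : ℤ →₀ ℂ, ∀ x : unitInterval,
        f x = laurentEval R (Complex.exp (2 * Real.pi * Complex.I * (x : ℝ))) *
          (starRingEnd ℂ) (laurentEval R (Complex.exp (2 * Real.pi * Complex.I * (x : ℝ))))} =
      {f : C(unitInterval, ℂ) |
        (∀ x : unitInterval, ∃ r : ℝ, 0 ≤ r ∧ f x = (r : ℂ)) ∧ f 0 = f 1} := by
  haveI : Fact (0 < (1:ℝ)) := ⟨one_pos⟩
  apply Set.Subset.antisymm
  · apply closure_minimal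
    · rintro f ⟨R, hR⟩
      refine ⟨fun x => ⟨Complex.normSq (laurentEval R
        (Complex.exp (2 * Real.pi * Complex.I * (x:ℝ)))), Complex.normSq_nonneg _, by
          rw [hR x, Complex.mul_conj]⟩, ?_⟩
      rw [hR 0, hR 1]
      norm_num [Complex.exp_two_pi_mul_I]
    · apply IsClosed.inter
      · have hcl : IsClosed {f : C(unitInterval,ℂ) | ∀ x, ∃ r : ℝ, 0 ≤ r ∧ f x = (r:ℂ)} := by
          have he : {f : C(unitInterval,ℂ) | ∀ x, ∃ r : ℝ, 0 ≤ r ∧ f x = (r:ℂ)} =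
              ⋂ x : unitInterval,
                (fun f : C(unitInterval,ℂ) => f x) ⁻¹' {z : ℂ | 0 ≤ z.re ∧ z.im = 0} := by
            ext f
            simp only [Set.mem_setOf_eq, Set.mem_iInter, Set.mem_preimage]
            constructor
            · intro h x
              obtain ⟨r, hr, he⟩ := h x
              rw [he]; simpa using hr
            · intro h x
              exact ⟨(f x).re, (h x).1, (Complex.ext (by simp) (by simp [(h x).2])).symm⟩
          rw [he]
          refine isClosed_iInter fun x => IsClosed.preimage (by fun_prop) ?_
          exact (isClosed_le continuous_const Complex.continuous_re).inter
            (isClosed_eq Complex.continuous_im continuous_const)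
        exact hcl
      · exact isClosed_eq (by fun_prop) (by fun_prop)
  · rintro f ⟨hpos, hper⟩
    rw [Metric.mem_closure_iff]
    intro ε hε
    -- the square-root function
    set s : unitInterval → ℝ := fun x => Real.sqrt (f x).re with hs_def
    have hs_cont : Continuous s :=
      Real.continuous_sqrt.comp (Complex.continuous_re.comp f.continuous)
    have hs_nonneg : ∀ x, 0 ≤ s x := fun x => Real.sqrt_nonneg _
    have hs_sq : ∀ x, f x = (((s x)^2 : ℝ) : ℂ) := by
      intro x
      obtain ⟨r, hr0, hr⟩ := hpos x
      have hre : (f x).re = r := by rw [hr]; simp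
      rw [hs_def]
      simp only [hre]
      rw [Real.sq_sqrt hr0, hr]
    have hs01 : s 0 = s 1 := by rw [hs_def]; simp [hper]
    obtain ⟨F, hF_cont, hFq⟩ := exists_addCircle_lift s hs_cont hs01
    set G : C(AddCircle (1:ℝ), ℂ) :=
      ⟨fun θ => (F θ : ℂ), Complex.continuous_ofReal.comp hF_cont⟩ with hG_def
    set M : ℝ := ‖G‖ with hM_def
    have hM0 : 0 ≤ M := norm_nonneg _
    set δ : ℝ := min 1 (ε / (2*M+2)) with hδ_def
    have hδ0 : 0 < δ := lt_min one_pos (div_pos hε (by linarith))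
    -- density of the fourier span
    have hGmem : G ∈ closure
        ((Submodule.span ℂ (Set.range (@fourier (1:ℝ)))) : Set C(AddCircle (1:ℝ), ℂ)) := by
      have htop := span_fourier_closure_eq_top (T := 1)
      have : G ∈ (Submodule.span ℂ (Set.range (@fourier (1:ℝ)))).topologicalClosure := by
        rw [htop]; trivial
      exact this
    rw [Metric.mem_closure_iff] at hGmem
    obtain ⟨P, hPmem, hPdist⟩ := hGmem δ hδ0
    rw [SetLike.mem_coe, Finsupp.mem_span_range_iff_exists_finsupp] at hPmem
    obtain ⟨c, hc⟩ := hPmem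
    -- the approximating generator
    have hq_cont : Continuous (fun x : unitInterval => P (((x:ℝ) : AddCircle (1:ℝ)))) :=
      P.continuous.comp ((AddCircle.continuous_mk' 1).comp continuous_subtype_val)
    set gen : C(unitInterval, ℂ) :=
      ⟨fun x => P (((x:ℝ) : AddCircle (1:ℝ))) *
          (starRingEnd ℂ) (P (((x:ℝ) : AddCircle (1:ℝ)))),
        hq_cont.mul (continuous_star.comp hq_cont)⟩ with hgen_def
    have hPeval : ∀ x : unitInterval,
        P (((x:ℝ) : AddCircle (1:ℝ))) =
          laurentEval c (Complex.exp (2 * Real.pi * Complex.I * (x:ℝ))) := by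
      intro x
      rw [← hc]
      simp only [laurentEval, Finsupp.sum, ContinuousMap.coe_sum, Finset.sum_apply,
        ContinuousMap.coe_smul, Pi.smul_apply, smul_eq_mul, fourier_eq_exp_pow]
    refine ⟨gen, ⟨c, fun x => by
      rw [hgen_def]; simp only [ContinuousMap.coe_mk]; rw [hPeval x]⟩, ?_⟩
    rw [ContinuousMap.dist_lt_iff hε]
    intro x
    set z := P (((x:ℝ) : AddCircle (1:ℝ))) with hz_def
    have hGx : G (((x:ℝ) : AddCircle (1:ℝ))) = ((s x : ℝ) : ℂ) := by
      rw [hG_def]; simp [hFq x]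
    have hd : dist (G (((x:ℝ) : AddCircle (1:ℝ)))) z < δ :=
      lt_of_le_of_lt (ContinuousMap.dist_apply_le_dist _) hPdist
    have hnormG : ‖G (((x:ℝ) : AddCircle (1:ℝ)))‖ = s x := by
      rw [hGx, Complex.norm_real, Real.norm_of_nonneg (hs_nonneg x)]
    have hsM : s x ≤ M := by
      rw [← hnormG]; exact G.norm_coe_le_norm _
    have hzM : ‖z‖ ≤ M + δ := by
      have h1 := abs_le.mp (abs_norm_sub_norm_le (G (((x:ℝ) : AddCircle (1:ℝ)))) z)
      rw [← dist_eq_norm] at h1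
      rw [hnormG] at h1
      linarith [h1.1, hd.le, hsM]
    have hdiff : |s x - ‖z‖| ≤ dist (G (((x:ℝ) : AddCircle (1:ℝ)))) z := by
      rw [← hnormG, dist_eq_norm]
      exact abs_norm_sub_norm_le _ _
    have hgenx : gen x = ((‖z‖^2 : ℝ) : ℂ) := by
      rw [hgen_def]
      simp only [ContinuousMap.coe_mk, ← hz_def]
      rw [Complex.mul_conj]
      norm_cast
      rw [Complex.normSq_eq_norm_sq]
    have hfd : dist (f x) (gen x) = |(s x)^2 - ‖z‖^2| := by
      rw [hs_sq x, hgenx, Complex.dist_eq, ← Complex.ofReal_sub, Complex.norm_real, Real.norm_eq_abs]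
    have hfactor : |(s x)^2 - ‖z‖^2| ≤ |s x - ‖z‖| * (s x + ‖z‖) := by
      have hring : (s x)^2 - ‖z‖^2 = (s x - ‖z‖) * (s x + ‖z‖) := by ring
      rw [hring, abs_mul]
      have h1 : 0 ≤ s x + ‖z‖ := by positivity
      rw [_root_.abs_of_nonneg h1]
    have hsum : s x + ‖z‖ ≤ 2*M + 2 := by
      have hδ1 : δ ≤ 1 := min_le_left _ _
      linarith
    calc dist (f x) (gen x) ≤ |s x - ‖z‖| * (s x + ‖z‖) := by rw [hfd]; exact hfactor
      _ ≤ dist (G (((x:ℝ) : AddCircle (1:ℝ)))) z * (2*M+2) :=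
          mul_le_mul hdiff hsum (by positivity) dist_nonneg
      _ < δ * (2*M+2) := mul_lt_mul_of_pos_right hd (by linarith)
      _ ≤ ε := by
          rw [hδ_def]
          calc min 1 (ε / (2*M+2)) * (2*M+2) ≤ (ε / (2*M+2)) * (2*M+2) :=
                mul_le_mul_of_nonneg_right (min_le_right _ _) (by linarith)
            _ = ε := div_mul_cancel₀ _ (by linarith)
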